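/- For every k > 0 and every y ≥ 0, the hybrid Poisson reparameterized data-fit χ_{k,y} is differentiable at every point of ℝ and its derivative is Lipschitz continuous on ℝ with constant max(k, y·k²). -/

import Mathlib

open Real Set

/-- exp is 1-Lipschitz on nonpositive reals. -/
private lemma exp_lip {u v : ℝ} (hu : u ≤ 0) (hv : v ≤ 0) :
    |Real.exp u - Real.exp v| ≤ |u - v| := by
  rcases le_total u v with h | h
  · rw [abs_sub_comm, abs_of_nonneg (by linarith [Real.exp_le_exp.2 h]),
      abs_sub_comm, abs_of_nonneg (by linarith)]
    have h1 := Real.add_one_le_exp (u - v)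
    have h2 := Real.exp_le_one_iff.2 hv
    have h3 := Real.exp_pos v
    have h4 : Real.exp (u - v) * Real.exp v = Real.exp u := by
      rw [← Real.exp_add]; ring_nf
    nlinarith [mul_le_mul_of_nonneg_right h1 h3.le,
      mul_nonneg (by linarith : (0:ℝ) ≤ v - u) (by linarith : (0:ℝ) ≤ 1 - Real.exp v)]
  · rw [abs_of_nonneg (by linarith [Real.exp_le_exp.2 h]), abs_of_nonneg (by linarith)]
    have h1 := Real.add_one_le_exp (v - u)
    have h2 := Real.exp_le_one_iff.2 hu
    have h3 := Real.exp_pos u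
    have h4 : Real.exp (v - u) * Real.exp u = Real.exp v := by
      rw [← Real.exp_add]; ring_nf
    nlinarith [mul_le_mul_of_nonneg_right h1 h3.le,
      mul_nonneg (by linarith : (0:ℝ) ≤ u - v) (by linarith : (0:ℝ) ≤ 1 - Real.exp u)]

theorem poisson_hybrid_datafit_lipschitz_grad
    (k : ℝ) (hk : 0 < k) (y : ℝ) (hy : 0 ≤ y) :
    Differentiable ℝ (fun θ : ℝ =>
      if θ ≤ 1 / k then
        (1 / k) * Real.exp (k * θ - 1) - y * (k * θ - Real.log k - 1)
      else θ - y * Real.log θ) ∧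
    ∀ a b : ℝ,
      |deriv (fun θ : ℝ =>
        if θ ≤ 1 / k then
          (1 / k) * Real.exp (k * θ - 1) - y * (k * θ - Real.log k - 1)
        else θ - y * Real.log θ) a
       - deriv (fun θ : ℝ =>
        if θ ≤ 1 / k then
          (1 / k) * Real.exp (k * θ - 1) - y * (k * θ - Real.log k - 1)
        else θ - y * Real.log θ) b|
      ≤ max k (y * k ^ 2) * |a - b| := by
  have hk0 : k ≠ 0 := ne_of_gt hk
  have hc : (0:ℝ) < 1 / k := by positivity
  have hkk : k * (1 / k) = 1 := by field_simp
  set f : ℝ → ℝ := fun θ : ℝ =>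
      if θ ≤ 1 / k then
        (1 / k) * Real.exp (k * θ - 1) - y * (k * θ - Real.log k - 1)
      else θ - y * Real.log θ with hf
  set g : ℝ → ℝ := fun θ : ℝ =>
      if θ ≤ 1 / k then Real.exp (k * θ - 1) - y * k else 1 - y / θ with hg
  have hf_le : ∀ t : ℝ, t ≤ 1/k →
      f t = (1 / k) * Real.exp (k * t - 1) - y * (k * t - Real.log k - 1) :=
    fun t ht => if_pos ht
  have hf_gt : ∀ t : ℝ, ¬ t ≤ 1/k → f t = t - y * Real.log t :=
    fun t ht => if_neg ht
  have hg_le : ∀ t : ℝ, t ≤ 1/k → g t = Real.exp (k * t - 1) - y * k :=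
    fun t ht => if_pos ht
  have hg_gt : ∀ t : ℝ, ¬ t ≤ 1/k → g t = 1 - y / t :=
    fun t ht => if_neg ht
  -- derivative of the first branch
  have hb1 : ∀ θ : ℝ, HasDerivAt
      (fun t : ℝ => (1 / k) * Real.exp (k * t - 1) - y * (k * t - Real.log k - 1))
      (Real.exp (k * θ - 1) - y * k) θ := by
    intro θ
    have h1 : HasDerivAt (fun t : ℝ => k * t - 1) k θ := by
      simpa using ((hasDerivAt_id θ).const_mul k).sub_const 1
    have h2 := (h1.exp).const_mul (1 / k)
    have h3 : HasDerivAt (fun t : ℝ => y * (k * t - Real.log k - 1)) (y * k) θ := by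
      simpa using ((((hasDerivAt_id θ).const_mul k).sub_const (Real.log k)).sub_const 1).const_mul y
    have h4 := h2.sub h3
    have he : 1 / k * (Real.exp (k * θ - 1) * k) - y * k = Real.exp (k * θ - 1) - y * k := by
      field_simp
    rwa [he] at h4
  -- derivative of the second branch (for θ > 0)
  have hb2 : ∀ θ : ℝ, 0 < θ → HasDerivAt
      (fun t : ℝ => t - y * Real.log t) (1 - y / θ) θ := by
    intro θ hθ
    have := (hasDerivAt_id' θ).sub ((Real.hasDerivAt_log hθ.ne').const_mul y)
    exact this.congr_deriv (by rw [div_eq_mul_inv])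
  have hbd : k * (1 / k) - 1 = 0 := by rw [hkk]; ring
  have hval : (1 / k) * Real.exp (k * (1/k) - 1) - y * (k * (1/k) - Real.log k - 1)
      = (1/k) - y * Real.log (1/k) := by
    rw [hbd, Real.exp_zero, hkk, one_div, Real.log_inv]
    ring
  -- HasDerivAt f (g θ) θ for all θ
  have key : ∀ θ : ℝ, HasDerivAt f (g θ) θ := by
    intro θ
    rcases lt_trichotomy θ (1 / k) with hθ | hθ | hθ
    · have hev : f =ᶠ[nhds θ] (fun t : ℝ =>
          (1 / k) * Real.exp (k * t - 1) - y * (k * t - Real.log k - 1)) := by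
        filter_upwards [Iio_mem_nhds hθ] with t ht
        exact hf_le t (le_of_lt (mem_Iio.1 ht))
      have h := (hb1 θ).congr_of_eventuallyEq hev
      rw [hg_le θ hθ.le]
      exact h
    · -- boundary point
      subst hθ
      have hgv : g (1/k) = 1 - y * k := by
        rw [hg_le _ le_rfl, hbd, Real.exp_zero]
      have h1 : HasDerivWithinAt f (1 - y * k) (Iic (1/k)) (1/k) := by
        have h := ((hb1 (1/k)).hasDerivWithinAt (s := Iic (1/k))).congr
          (fun t ht => hf_le t (mem_Iic.1 ht)) (hf_le _ le_rfl)
        rwa [hbd, Real.exp_zero] at h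
      have h2 : HasDerivWithinAt f (1 - y * k) (Ici (1/k)) (1/k) := by
        have hd := ((hb2 (1/k) hc).hasDerivWithinAt (s := Ici (1/k))).congr
          (f₁ := f)
          (fun t ht => by
            rcases eq_or_lt_of_le (mem_Ici.1 ht) with h | h
            · rw [← h, hf_le _ le_rfl, hval]
            · exact hf_gt t (not_le.2 h))
          (by rw [hf_le _ le_rfl, hval])
        have he : 1 - y / (1/k) = 1 - y * k := by
          field_simp
        rwa [he] at hd
      have h3 := h1.union h2
      rw [Iic_union_Ici, hasDerivWithinAt_univ] at h3
      rwa [hgv]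
    · have hev : f =ᶠ[nhds θ] (fun t : ℝ => t - y * Real.log t) := by
        filter_upwards [Ioi_mem_nhds hθ] with t ht
        exact hf_gt t (not_le.2 (mem_Ioi.1 ht))
      have h := (hb2 θ (hc.trans hθ)).congr_of_eventuallyEq hev
      rw [hg_gt θ (not_le.2 hθ)]
      exact h
  have hderiv : deriv f = g := funext fun θ => (key θ).deriv
  refine ⟨fun θ => (key θ).differentiableAt, ?_⟩
  rw [hderiv]
  set L := max k (y * k ^ 2) with hL
  have hkL : k ≤ L := le_max_left _ _
  have hyL : y * k ^ 2 ≤ L := le_max_right _ _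
  have hgge : ∀ t : ℝ, 1/k ≤ t → g t = 1 - y / t := by
    intro t ht
    rcases eq_or_lt_of_le ht with h | h
    · rw [← h, hg_le _ le_rfl, hbd, Real.exp_zero]
      field_simp
    · exact hg_gt t (not_le.2 h)
  have hL1 : ∀ a b : ℝ, a ≤ 1/k → b ≤ 1/k → |g a - g b| ≤ k * |a - b| := by
    intro a b ha hb
    rw [hg_le a ha, hg_le b hb]
    have h1 : k * a - 1 ≤ 0 := by nlinarith [mul_le_mul_of_nonneg_left ha hk.le]
    have h2 : k * b - 1 ≤ 0 := by nlinarith [mul_le_mul_of_nonneg_left hb hk.le]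
    calc |Real.exp (k*a-1) - y*k - (Real.exp (k*b-1) - y*k)|
        = |Real.exp (k*a-1) - Real.exp (k*b-1)| := by ring_nf
      _ ≤ |(k*a-1) - (k*b-1)| := exp_lip h1 h2
      _ = k * |a - b| := by
          rw [show (k*a-1) - (k*b-1) = k*(a-b) by ring, abs_mul, abs_of_pos hk]
  have hL2 : ∀ a b : ℝ, 1/k ≤ a → 1/k ≤ b → |g a - g b| ≤ y * k^2 * |a - b| := by
    intro a b ha hb
    have ha0 : 0 < a := lt_of_lt_of_le hc ha
    have hb0 : 0 < b := lt_of_lt_of_le hc hb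
    rw [hgge a ha, hgge b hb]
    have he : (1 - y/a) - (1 - y/b) = y * (a - b) / (a*b) := by
      field_simp; ring
    rw [he, abs_div, abs_mul, abs_of_nonneg hy, abs_of_pos (mul_pos ha0 hb0),
      div_le_iff₀ (mul_pos ha0 hb0)]
    have h12 : (1/k)*(1/k) ≤ a*b := mul_le_mul ha hb hc.le ha0.le
    have h13 : (1:ℝ) ≤ k^2 * (a*b) := by
      have h14 := mul_le_mul_of_nonneg_left h12 (sq_nonneg k)
      calc (1:ℝ) = k^2 * ((1/k)*(1/k)) := by field_simp
        _ ≤ k^2*(a*b) := h14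
    nlinarith [abs_nonneg (a-b), mul_nonneg hy (abs_nonneg (a-b))]
  intro a b
  rcases le_or_gt a (1/k) with ha | ha <;> rcases le_or_gt b (1/k) with hb | hb
  · exact (hL1 a b ha hb).trans (mul_le_mul_of_nonneg_right hkL (abs_nonneg _))
  · calc |g a - g b| ≤ |g a - g (1/k)| + |g (1/k) - g b| := abs_sub_le _ _ _
      _ ≤ k * |a - 1/k| + y*k^2 * |1/k - b| :=
          add_le_add (hL1 a _ ha le_rfl) (hL2 _ b le_rfl hb.le)
      _ ≤ L * |a - 1/k| + L * |1/k - b| :=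
          add_le_add (mul_le_mul_of_nonneg_right hkL (abs_nonneg _))
            (mul_le_mul_of_nonneg_right hyL (abs_nonneg _))
      _ = L * (|a - 1/k| + |1/k - b|) := by ring
      _ = L * |a - b| := by
          rw [abs_of_nonpos (by linarith : a - 1/k ≤ 0),
            abs_of_nonpos (by linarith : 1/k - b ≤ 0),
            abs_sub_comm, abs_of_nonneg (by linarith : (0:ℝ) ≤ b - a)]
          ring
  · calc |g a - g b| ≤ |g a - g (1/k)| + |g (1/k) - g b| := abs_sub_le _ _ _
      _ ≤ y*k^2 * |a - 1/k| + k * |1/k - b| :=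
          add_le_add (hL2 a _ ha.le le_rfl) (hL1 _ b le_rfl hb)
      _ ≤ L * |a - 1/k| + L * |1/k - b| :=
          add_le_add (mul_le_mul_of_nonneg_right hyL (abs_nonneg _))
            (mul_le_mul_of_nonneg_right hkL (abs_nonneg _))
      _ = L * (|a - 1/k| + |1/k - b|) := by ring
      _ = L * |a - b| := by
          rw [abs_of_nonneg (by linarith : (0:ℝ) ≤ a - 1/k),
            abs_of_nonneg (by linarith : (0:ℝ) ≤ 1/k - b),
            abs_of_nonneg (by linarith : (0:ℝ) ≤ a - b)]
          ring
  · exact (hL2 a b ha.le hb.le).trans (mul_le_mul_of_nonneg_right hyL (abs_nonneg _))
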